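/- For every A ∈ SL(2,ℝ) with A ≠ I and A ≠ −I, there exists g ∈ SL(2,ℝ) such that ‖g⁻¹ A g‖ ≠ ‖A‖. -/
import Mathlib


open Real

noncomputable section

abbrev SL2 := Matrix.SpecialLinearGroup (Fin 2) ℝ

/-- inverse hyperbolic cosine -/
def acosh (x : ℝ) : ℝ := Real.log (x + Real.sqrt (x ^ 2 - 1))

/-- the "pseudo-distance from the origin" ‖g‖ = arcosh((g₁₁²+g₁₂²+g₂₁²+g₂₂²)/2) -/
def gnorm (g : SL2) : ℝ :=
  acosh ((g.1 0 0 ^ 2 + g.1 0 1 ^ 2 + g.1 1 0 ^ 2 + g.1 1 1 ^ 2) / 2)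

def z1 (x : SL2) : ℂ :=
  (((x.1 0 0 + x.1 1 1 : ℝ) : ℂ) + Complex.I * ((x.1 1 0 - x.1 0 1 : ℝ) : ℂ)) / 2

def z2 (x : SL2) : ℂ :=
  (((x.1 0 1 + x.1 1 0 : ℝ) : ℂ) + Complex.I * ((x.1 0 0 - x.1 1 1 : ℝ) : ℂ)) / 2

/-- the spherical function ψ_{m,k}(x) = z₁(x)^{-(k+2m)} z₂(x)^k -/
def psi (m k : ℕ) (x : SL2) : ℂ := z1 x ^ (-(k + 2 * m : ℤ)) * z2 x ^ k

/-- γ is central iff both components are ±1 -/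
def IsCentral (γ : SL2 × SL2) : Prop :=
  (γ.1.1 = 1 ∨ γ.1.1 = -1) ∧ (γ.2.1 = 1 ∨ γ.2.1 = -1)

/-- ε_Γ -/
def epsGamma (Γ : Set (SL2 × SL2)) : ℝ :=
  (1 / 3) * sInf {r | ∃ γ ∈ Γ, ¬IsCentral γ ∧ r = |gnorm γ.1 - gnorm γ.2|}

/-- the set counted by N_Γ(x,R) -/
def orbitSet (Γ : Set (SL2 × SL2)) (x : SL2) (R : ℝ) : Set (SL2 × SL2) :=
  {γ | γ ∈ Γ ∧ gnorm (γ.1 * x * γ.2⁻¹) ≤ R}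

/-- the constant m(C,α,ε,s) -/
def mConst (C α ε : ℝ) (s : ℕ) : ℝ :=
  (Real.log 2 * s + 2 * α * ε + Real.log (1 + 2 ^ s * C * Real.exp (6 * α * ε))) /
    Real.log (Real.cosh ε)

def chi (x : ℝ) : ℝ := if x = 1 then 0 else 1

/-- θ_{a,N} for a tuple a of length k (with the convention a_{-1} = 1) -/
def thetaAN (a : ℕ → ℝ) (k : ℕ) (N : ℝ) : ℝ :=
  Real.pi * ∑ i ∈ Finset.range k,
    (chi (a i) - if i = 0 then 0 else chi (a (i - 1))) * N ^ (-(i : ℤ))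

/-- the sign tuple a(b) attached to b -/
def signOf (b : ℕ → ℝ) (j : ℕ) : ℝ := if 0 ≤ b j then 1 else -1

/-- ψ_{m,b} = Σ_{j<k} b_j ψ_{m,3^j} -/
def psiB (m k : ℕ) (b : ℕ → ℝ) (x : SL2) : ℂ :=
  ∑ j ∈ Finset.range k, (b j : ℂ) * psi m (3 ^ j) x

/-- f_b(u) = Σ_{j<k} b_j cos(3^j θ_{a(b),3}) u^{3^j} -/
def fb (k : ℕ) (b : ℕ → ℝ) (u : ℝ) : ℝ :=
  ∑ j ∈ Finset.range k, b j * Real.cos (3 ^ j * thetaAN (signOf b) k 3) * u ^ 3 ^ j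

/-- the rotation matrix k(θ) -/
def kMat (θ : ℝ) : SL2 :=
  ⟨!![Real.cos θ, -Real.sin θ; Real.sin θ, Real.cos θ], by
    simp [Matrix.det_fin_two_of]
    nlinarith [Real.sin_sq_add_cos_sq θ]⟩

/-- the diagonal matrix a(t) -/
def aMat (t : ℝ) : SL2 :=
  ⟨!![Real.exp t, 0; 0, Real.exp (-t)], by
    simp [Matrix.det_fin_two_of, ← Real.exp_add]⟩

end
/-- upper triangular shear -/
noncomputable def uMat : SL2 :=
  ⟨!![1, 1; 0, 1], by simp [Matrix.det_fin_two_of]⟩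

lemma acosh_lt {x y : ℝ} (hx : 1 ≤ x) (hxy : x < y) : acosh x < acosh y := by
  unfold acosh
  apply Real.log_lt_log
  · have := Real.sqrt_nonneg (x ^ 2 - 1); linarith
  · have h1 : Real.sqrt (x ^ 2 - 1) < Real.sqrt (y ^ 2 - 1) :=
      Real.sqrt_lt_sqrt (by nlinarith) (by nlinarith)
    linarith

lemma conj_entries (g A : SL2) :
    (((g⁻¹ * A * g : SL2) : Matrix (Fin 2) (Fin 2) ℝ) 0 0 =
      g.1 1 1 * A.1 0 0 * g.1 0 0 + g.1 1 1 * A.1 0 1 * g.1 1 0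
        - g.1 0 1 * A.1 1 0 * g.1 0 0 - g.1 0 1 * A.1 1 1 * g.1 1 0) ∧
    (((g⁻¹ * A * g : SL2) : Matrix (Fin 2) (Fin 2) ℝ) 0 1 =
      g.1 1 1 * A.1 0 0 * g.1 0 1 + g.1 1 1 * A.1 0 1 * g.1 1 1
        - g.1 0 1 * A.1 1 0 * g.1 0 1 - g.1 0 1 * A.1 1 1 * g.1 1 1) ∧
    (((g⁻¹ * A * g : SL2) : Matrix (Fin 2) (Fin 2) ℝ) 1 0 =
      -g.1 1 0 * A.1 0 0 * g.1 0 0 - g.1 1 0 * A.1 0 1 * g.1 1 0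
        + g.1 0 0 * A.1 1 0 * g.1 0 0 + g.1 0 0 * A.1 1 1 * g.1 1 0) ∧
    (((g⁻¹ * A * g : SL2) : Matrix (Fin 2) (Fin 2) ℝ) 1 1 =
      -g.1 1 0 * A.1 0 0 * g.1 0 1 - g.1 1 0 * A.1 0 1 * g.1 1 1
        + g.1 0 0 * A.1 1 0 * g.1 0 1 + g.1 0 0 * A.1 1 1 * g.1 1 1) := by
  refine ⟨?_, ?_, ?_, ?_⟩ <;>
    simp [Matrix.SpecialLinearGroup.coe_inv, Matrix.adjugate_fin_two, Matrix.mul_apply,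
      Fin.sum_univ_two, Matrix.vecMul, dotProduct] <;> ring

/-- sum of squared entries of a conjugate, with the conjugator's entries abstracted -/
lemma conj_sum (g A : SL2) (p q r s : ℝ)
    (h00 : g.1 0 0 = p) (h01 : g.1 0 1 = q) (h10 : g.1 1 0 = r) (h11 : g.1 1 1 = s) :
    ((g⁻¹ * A * g : SL2).1 0 0 ^ 2 + (g⁻¹ * A * g : SL2).1 0 1 ^ 2 +
     (g⁻¹ * A * g : SL2).1 1 0 ^ 2 + (g⁻¹ * A * g : SL2).1 1 1 ^ 2) / 2 =
    ((s * A.1 0 0 * p + s * A.1 0 1 * r - q * A.1 1 0 * p - q * A.1 1 1 * r) ^ 2 +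
     (s * A.1 0 0 * q + s * A.1 0 1 * s - q * A.1 1 0 * q - q * A.1 1 1 * s) ^ 2 +
     (-r * A.1 0 0 * p - r * A.1 0 1 * r + p * A.1 1 0 * p + p * A.1 1 1 * r) ^ 2 +
     (-r * A.1 0 0 * q - r * A.1 0 1 * s + p * A.1 1 0 * q + p * A.1 1 1 * s) ^ 2) / 2 := by
  obtain ⟨e00, e01, e10, e11⟩ := conj_entries g A
  simp only [h00, h01, h10, h11] at e00 e01 e10 e11
  rw [e00, e01, e10, e11]


theorem stmt10 (A : SL2) (h1 : A.1 ≠ 1) (h2 : A.1 ≠ -1) :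
    ∃ g : SL2, gnorm (g⁻¹ * A * g) ≠ gnorm A := by
  set a := A.1 0 0 with ha
  set b := A.1 0 1 with hb
  set c := A.1 1 0 with hc
  set d := A.1 1 1 with hd
  have hdet : a * d - b * c = 1 := by
    have := A.2
    rw [Matrix.det_fin_two] at this
    exact this
  have hS1 : 1 ≤ (a ^ 2 + b ^ 2 + c ^ 2 + d ^ 2) / 2 := by
    nlinarith [sq_nonneg (a - d), sq_nonneg (b + c)]
  have key : ∃ g : SL2,
      (a ^ 2 + b ^ 2 + c ^ 2 + d ^ 2) / 2 <
      ((g⁻¹ * A * g : SL2).1 0 0 ^ 2 + (g⁻¹ * A * g : SL2).1 0 1 ^ 2 +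
       (g⁻¹ * A * g : SL2).1 1 0 ^ 2 + (g⁻¹ * A * g : SL2).1 1 1 ^ 2) / 2 := by
    by_cases hbc : b = 0 ∧ c = 0
    · -- diagonal case, use the shear
      obtain ⟨hb0, hc0⟩ := hbc
      have hdet' : a * d = 1 := by rw [hb0, hc0] at hdet; linarith
      have had : a ≠ d := by
        intro had
        have ha2 : a * a = 1 := by linear_combination hdet' + a * had
        rcases mul_self_eq_one_iff.mp ha2 with h | h
        · apply h1
          rw [Matrix.eta_fin_two A.1, ← ha, ← hb, ← hc, ← hd, hb0, hc0, ← had, h]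
          rw [Matrix.one_fin_two]
        · apply h2
          have hd1 : d = -1 := by rw [h] at hdet'; linarith
          rw [Matrix.eta_fin_two A.1, ← ha, ← hb, ← hc, ← hd, hb0, hc0, h, hd1,
            Matrix.one_fin_two]
          norm_num
      refine ⟨uMat, ?_⟩
      rw [conj_sum uMat A 1 1 0 1 (by simp [uMat]) (by simp [uMat]) (by simp [uMat])
        (by simp [uMat]), ← ha, ← hb, ← hc, ← hd, hb0, hc0]
      have h0 : (0:ℝ) < (a - d) ^ 2 := by
        rcases (sub_ne_zero.mpr had).lt_or_gt with h' | h' <;> nlinarith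
      nlinarith [h0]
    · -- non-diagonal case: conjugate by aMat 1 or aMat (-1)
      have hbc2 : 0 < b ^ 2 + c ^ 2 := by
        rcases not_and_or.mp hbc with h | h <;> positivity
      have sumval : ∀ t : ℝ,
          (((aMat t)⁻¹ * A * aMat t : SL2).1 0 0 ^ 2 + ((aMat t)⁻¹ * A * aMat t : SL2).1 0 1 ^ 2 +
           ((aMat t)⁻¹ * A * aMat t : SL2).1 1 0 ^ 2 + ((aMat t)⁻¹ * A * aMat t : SL2).1 1 1 ^ 2) / 2
          = (a ^ 2 + b ^ 2 * Real.exp (-t) ^ 4 + c ^ 2 * Real.exp t ^ 4 + d ^ 2) / 2 := by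
        intro t
        have hts : Real.exp (-t) * Real.exp t = 1 := by rw [← Real.exp_add]; norm_num
        rw [conj_sum (aMat t) A (Real.exp t) 0 0 (Real.exp (-t)) (by simp [aMat])
          (by simp [aMat]) (by simp [aMat]) (by simp [aMat]), ← ha, ← hb, ← hc, ← hd]
        linear_combination ((a ^ 2 + d ^ 2) * (Real.exp t * Real.exp (-t) + 1) / 2) * hts
      set P := Real.exp 1 with hPdef
      set S := Real.exp (-1) with hSdef
      have hPS : P * S = 1 := by rw [hPdef, hSdef, ← Real.exp_add]; norm_num
      have hP : 1 < P := by
        rw [hPdef]; have := Real.add_one_lt_exp (x := 1) one_ne_zero; linarith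
      have hS0 : 0 < S := Real.exp_pos _
      have hsum : 0 < P ^ 4 + S ^ 4 - 2 := by
        have h2 : S ^ 2 < 1 := by nlinarith
        have h3 : 1 < P ^ 2 := by nlinarith
        nlinarith [sq_nonneg (P ^ 2 - S ^ 2), sq_nonneg (P * S - 1)]
      rcases lt_or_ge ((a ^ 2 + b ^ 2 + c ^ 2 + d ^ 2) / 2)
          ((a ^ 2 + b ^ 2 * S ^ 4 + c ^ 2 * P ^ 4 + d ^ 2) / 2) with h | h
      · exact ⟨aMat 1, by rw [sumval 1]; exact h⟩
      · refine ⟨aMat (-1), ?_⟩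
        rw [sumval (-1)]
        simp only [neg_neg, ← hPdef, ← hSdef]
        nlinarith [mul_pos hbc2 hsum]
  obtain ⟨g, hg⟩ := key
  refine ⟨g, ?_⟩
  unfold gnorm
  rw [← ha, ← hb, ← hc, ← hd]
  exact (acosh_lt hS1 hg).ne'
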